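/- Let f(n) = 16(n−1)/n for integers n ≥ 1. Then for every integer n ≥ 5, f(n−1) < P_n / P_{n-1} < f(n). -/

import Mathlib

theorem Pn_ratio_bounds (P : ℕ → ℝ)
    (hP0 : P 0 = 1) (hP1 : P 1 = 8)
    (hPrec : ∀ n : ℕ, 1 ≤ n →
      ((n : ℝ) + 1) ^ 2 * P (n + 1)
        = 8 * (3 * (n : ℝ) ^ 2 + 3 * (n : ℝ) + 1) * P n - 128 * (n : ℝ) ^ 2 * P (n - 1))
    (hPpos : ∀ n : ℕ, 0 < P n) :
    ∀ n : ℕ, 5 ≤ n →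
      16 * ((n : ℝ) - 2) / ((n : ℝ) - 1) < P n / P (n - 1) ∧
        P n / P (n - 1) < 16 * ((n : ℝ) - 1) / (n : ℝ) := by
  intro n hn
  induction n, hn using Nat.le_induction with
  | base =>
    have h1 := hPrec 1 (by norm_num)
    have h2 := hPrec 2 (by norm_num)
    have h3 := hPrec 3 (by norm_num)
    have h4 := hPrec 4 (by norm_num)
    norm_num at h1 h2 h3 h4
    rw [hP0, hP1] at h1
    have hP2 : P 2 = 80 := by linarith
    rw [hP1, hP2] at h2
    have hP3 : P 3 = 896 := by linarith
    rw [hP2, hP3] at h3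
    have hP4 : P 4 = 10816 := by linarith
    rw [hP3, hP4] at h4
    have hP5 : P 5 = 137728 := by linarith
    norm_num [hP4, hP5]
  | succ n hn ih =>
    have hn1 : (1:ℕ) ≤ n := by omega
    set x : ℝ := (n : ℝ) with hxdef
    have hx : (5:ℝ) ≤ x := by rw [hxdef]; exact_mod_cast hn
    have ha : 0 < P (n - 1) := hPpos _
    have hb : 0 < P n := hPpos _
    have hc : 0 < P (n + 1) := hPpos _
    have hrec := hPrec n hn1
    obtain ⟨ihlo, ihhi⟩ := ih
    rw [div_lt_div_iff₀ (by linarith) ha] at ihlo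
    rw [div_lt_div_iff₀ ha (by linarith)] at ihhi
    -- ihlo : 16 * (x - 2) * P (n-1) < P n * (x - 1)
    -- ihhi : P n * x < 16 * (x - 1) * P (n-1)
    have hsub : (n + 1) - 1 = n := by omega
    rw [hsub]
    push_cast
    constructor
    · rw [div_lt_div_iff₀ (by linarith) hb]
      have rec2 : (x - 2) * x * (((x:ℝ) + 1) ^ 2 * P (n + 1))
          = (x - 2) * x * (8 * (3 * x ^ 2 + 3 * x + 1) * P n - 128 * x ^ 2 * P (n - 1)) := by
        rw [hrec]
      have hlo' : 8 * x ^ 3 * (16 * (x - 2) * P (n - 1)) < 8 * x ^ 3 * (P n * (x - 1)) :=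
        mul_lt_mul_of_pos_left ihlo (by positivity)
      nlinarith [rec2, hlo', mul_pos hb (show (0:ℝ) < x ^ 2 - 4 * x - 4 by nlinarith),
        mul_pos (show (0:ℝ) < x - 2 by linarith) (show (0:ℝ) < (x + 1) ^ 2 by positivity)]
    · rw [div_lt_div_iff₀ hb (by linarith)]
      have rec2 : (x - 1) * (((x:ℝ) + 1) ^ 2 * P (n + 1))
          = (x - 1) * (8 * (3 * x ^ 2 + 3 * x + 1) * P n - 128 * x ^ 2 * P (n - 1)) := by
        rw [hrec]
      have hhi' : 8 * x ^ 2 * (P n * x) < 8 * x ^ 2 * (16 * (x - 1) * P (n - 1)) :=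
        mul_lt_mul_of_pos_left ihhi (by positivity)
      nlinarith [rec2, hhi', hb,
        mul_pos (show (0:ℝ) < x - 1 by linarith) (show (0:ℝ) < x + 1 by linarith)]
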